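/- Let D ≥ 1, let Γ^a_{bc}(q) be smooth connection coefficients on ℝ^D symmetric in b,c, let Q^a(q) be smooth, and let M_{i₁...i_r}(t,q) for r = 0,1,…,m (with M(t,q) the scalar case r = 0) be smooth totally symmetric tensor fields. Define I(t,q,q̇) = Σ_{r=0}^{m} M_{i₁...i_r}(t,q) q̇^{i₁}⋯q̇^{i_r}. Then I is a first integral of the system q̈^a = −Γ^a_{bc}(q)q̇^bq̇^c − Q^a(q) (i.e. t ↦ I(t,q(t),q̇(t)) is constant along every C² solution) if and only if for every r = 0,1,…,m,m+1 the equations ∂_t M_{i₁...i_r} + M_{(i₁...i_{r−1}|i_r)} − (r+1) M_{i₁...i_r i_{r+1}} Q^{i_{r+1}} = 0 hold identically, with the conventions that M_{i₁...i_r} = 0 for r > m and that the covariant-derivative term is absent when r = 0. -/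

import Mathlib

noncomputable section
open scoped BigOperators

/-- Points of the configuration space `ℝ^D`. -/
abbrev Vec (D : ℕ) := Fin D → ℝ

/-- Connection coefficients: `Conn D Γ` with `Γ q a b c = Γ^a_{bc}(q)`. -/
abbrev Conn (D : ℕ) := Vec D → Fin D → Fin D → Fin D → ℝ

/-- Totally covariant `r`-tensor fields on `ℝ^D`. -/
abbrev Tens (D r : ℕ) := Vec D → (Fin r → Fin D) → ℝ

/-- Partial derivative `∂f/∂q^j`. -/
def pd {D : ℕ} (j : Fin D) (f : Vec D → ℝ) (q : Vec D) : ℝ :=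
  fderiv ℝ f q (Pi.single j 1)

/-- Covariant derivative `T_{i₁...i_r|j}` (the last slot is the derivative index `j`):
`T_{i₁...i_r|j} = ∂T_{i₁...i_r}/∂q^j − Σ_k Γ^s_{i_k j} T_{i₁...s...i_r}`. -/
def covTens {D r : ℕ} (Γ : Conn D) (T : Tens D r) : Tens D (r + 1) :=
  fun q idx =>
    pd (idx (Fin.last r)) (fun p => T p fun k => idx k.castSucc) q
      - ∑ k : Fin r, ∑ s : Fin D,
          Γ q s (idx k.castSucc) (idx (Fin.last r)) *
            T q (Function.update (fun l => idx l.castSucc) k s)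

/-- Symmetrization of a tensor over all of its indices. -/
def symT {D r : ℕ} (T : Tens D r) : Tens D r :=
  fun q idx => (r.factorial : ℝ)⁻¹ * ∑ σ : Equiv.Perm (Fin r), T q (idx ∘ σ)

/-- Totally symmetric tensor field. -/
def IsSymTens {D r : ℕ} (T : Tens D r) : Prop :=
  ∀ (q : Vec D) (idx : Fin r → Fin D) (σ : Equiv.Perm (Fin r)), T q (idx ∘ σ) = T q idx

/-- Smooth tensor field. -/
def SmoothTens {D r : ℕ} (T : Tens D r) : Prop :=
  ∀ idx : Fin r → Fin D, ContDiff ℝ (⊤ : ℕ∞) fun q => T q idx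

/-- Generalized Killing tensor of order `r` for the connection `Γ`:
`T_{(i₁...i_r|i_{r+1})} = 0`. -/
def IsGenKT {D r : ℕ} (Γ : Conn D) (T : Tens D r) : Prop :=
  ∀ q idx, symT (covTens Γ T) q idx = 0

/-- `q, v` solve `q̈^a = -Γ^a_{bc}(q) q̇^b q̇^c - Q^a(q)` on the set `s ⊆ ℝ`. -/
def IsSolutionOn {D : ℕ} (Γ : Conn D) (Q : Vec D → Fin D → ℝ)
    (s : Set ℝ) (q v : ℝ → Vec D) : Prop :=
  ∀ t ∈ s, ∀ a : Fin D,
    HasDerivAt (fun τ => q τ a) (v t a) t ∧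
    HasDerivAt (fun τ => v τ a)
      (-(∑ b, ∑ c, Γ (q t) a b c * v t b * v t c) - Q (q t) a) t

/-- `I(t,q,q̇)` is a first integral of the system: it is constant along every
(C²) solution defined on an open interval. -/
def FirstIntegral {D : ℕ} (Γ : Conn D) (Q : Vec D → Fin D → ℝ)
    (I : ℝ → Vec D → Vec D → ℝ) : Prop :=
  ∀ (a b : ℝ) (q v : ℝ → Vec D), IsSolutionOn Γ Q (Set.Ioo a b) q v →
    ∀ t₁ ∈ Set.Ioo a b, ∀ t₂ ∈ Set.Ioo a b,
      I t₁ (q t₁) (v t₁) = I t₂ (q t₂) (v t₂)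

/-- The contraction `L_c Q^c` of a rank-1 tensor with the generalized forces. -/
def dotQ {D : ℕ} (L : Tens D 1) (Q : Vec D → Fin D → ℝ) (q : Vec D) : ℝ :=
  ∑ c, L q (fun _ => c) * Q q c
namespace Stmt0Aux

open Finset

variable {D : ℕ}

/-- Contraction of an index-array with velocities. -/
def ctr {D : ℕ} (r : ℕ) (c : (Fin r → Fin D) → ℝ) (v : Vec D) : ℝ :=
  ∑ idx : Fin r → Fin D, c idx * ∏ k, v (idx k)

/-- reindex a sum over `Fin r → Fin D` by precomposition with a permutation -/
lemma sum_comp_perm {r : ℕ} (σ : Equiv.Perm (Fin r)) (f : (Fin r → Fin D) → ℝ) :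
    ∑ idx : Fin r → Fin D, f (idx ∘ σ) = ∑ idx : Fin r → Fin D, f idx := by
  exact Equiv.sum_comp (Equiv.arrowCongr σ.symm (Equiv.refl (Fin D))) f

lemma prod_comp_perm {r : ℕ} (σ : Equiv.Perm (Fin r)) (g : Fin r → ℝ) :
    ∏ k, g (σ k) = ∏ k, g k := Equiv.prod_comp σ g

/-- symmetrization doesn't change the contraction -/
lemma ctr_symT {r : ℕ} (T : Tens D r) (q : Vec D) (v : Vec D) :
    ctr r (fun idx => symT T q idx) v = ctr r (T q) v := by
  unfold ctr symT
  have h1 : ∀ σ : Equiv.Perm (Fin r),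
      ∑ idx : Fin r → Fin D, T q (idx ∘ σ) * ∏ k, v (idx k)
        = ∑ idx : Fin r → Fin D, T q idx * ∏ k, v (idx k) := by
    intro σ
    calc ∑ idx : Fin r → Fin D, T q (idx ∘ σ) * ∏ k, v (idx k)
        = ∑ idx : Fin r → Fin D, T q (idx ∘ σ) * ∏ k, v ((idx ∘ σ) k) := by
          refine Finset.sum_congr rfl fun idx _ => by
            rw [show ∏ k, v ((idx ∘ σ) k) = ∏ k, v (idx k) from
              Equiv.prod_comp σ (fun k => v (idx k))]
      _ = ∑ idx : Fin r → Fin D, T q idx * ∏ k, v (idx k) :=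
          sum_comp_perm σ (fun idx => T q idx * ∏ k, v (idx k))
  calc ∑ idx : Fin r → Fin D, ((r.factorial : ℝ)⁻¹ * ∑ σ : Equiv.Perm (Fin r), T q (idx ∘ σ))
        * ∏ k, v (idx k)
      = ∑ idx : Fin r → Fin D, ∑ σ : Equiv.Perm (Fin r),
          (r.factorial : ℝ)⁻¹ * (T q (idx ∘ σ) * ∏ k, v (idx k)) := by
        refine Finset.sum_congr rfl fun idx _ => ?_
        rw [mul_assoc, Finset.sum_mul, Finset.mul_sum]
    _ = ∑ σ : Equiv.Perm (Fin r), (r.factorial : ℝ)⁻¹ *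
          ∑ idx : Fin r → Fin D, T q (idx ∘ σ) * ∏ k, v (idx k) := by
        rw [Finset.sum_comm]
        exact Finset.sum_congr rfl fun σ _ => (Finset.mul_sum _ _ _).symm
    _ = ∑ σ : Equiv.Perm (Fin r), (r.factorial : ℝ)⁻¹ * ctr r (T q) v := by
        exact Finset.sum_congr rfl fun σ _ => by rw [h1 σ]; rfl
    _ = ctr r (T q) v := by
        rw [Finset.sum_const, Finset.card_univ, Fintype.card_perm, nsmul_eq_mul, ← mul_assoc,
          Fintype.card_fin, mul_inv_cancel₀ (by exact_mod_cast r.factorial_ne_zero), one_mul]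

/-- sums over `Fin (r+1) → Fin D` split via `snoc` -/
lemma sum_snoc {r : ℕ} (f : (Fin (r + 1) → Fin D) → ℝ) :
    ∑ idx : Fin (r + 1) → Fin D, f idx
      = ∑ p : Fin r → Fin D, ∑ j : Fin D, f (Fin.snoc p j) := by
  rw [← Equiv.sum_comp (Fin.insertNthEquiv (fun _ => Fin D) (Fin.last r)) f]
  rw [Fintype.sum_prod_type, Finset.sum_comm]
  refine Finset.sum_congr rfl fun p _ => Finset.sum_congr rfl fun j _ => ?_
  simp [Fin.insertNthEquiv, Fin.insertNth_last]

end Stmt0Aux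
namespace Stmt0Aux

variable {D : ℕ}

/-- extend a permutation of `Fin r` to `Fin (r+1)` fixing the last index -/
def extPerm {r : ℕ} (σ : Equiv.Perm (Fin r)) : Equiv.Perm (Fin (r + 1)) :=
  (finSuccEquivLast.trans (σ.optionCongr.trans finSuccEquivLast.symm))

@[simp] lemma extPerm_castSucc {r : ℕ} (σ : Equiv.Perm (Fin r)) (i : Fin r) :
    extPerm σ i.castSucc = (σ i).castSucc := by
  simp [extPerm]

@[simp] lemma extPerm_last {r : ℕ} (σ : Equiv.Perm (Fin r)) :
    extPerm σ (Fin.last r) = Fin.last r := by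
  simp [extPerm]

lemma snoc_comp_extPerm {r : ℕ} (σ : Equiv.Perm (Fin r)) (p : Fin r → Fin D) (j : Fin D) :
    (Fin.snoc p j : Fin (r + 1) → Fin D) ∘ (extPerm σ) = Fin.snoc (p ∘ σ) j := by
  funext l
  refine Fin.lastCases ?_ (fun i => ?_) l
  · simp [Function.comp]
  · simp [Function.comp]

/-- the cycle moving `k` to the last position -/
def cyc {r : ℕ} (k : Fin (r + 1)) : Equiv.Perm (Fin (r + 1)) :=
  (finSuccEquiv' k).trans finSuccEquivLast.symm

@[simp] lemma cyc_at {r : ℕ} (k : Fin (r + 1)) : cyc k k = Fin.last r := by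
  simp [cyc, finSuccEquiv'_at]

@[simp] lemma cyc_succAbove {r : ℕ} (k : Fin (r + 1)) (i : Fin r) :
    cyc k (k.succAbove i) = i.castSucc := by
  simp [cyc, finSuccEquiv'_succAbove]

lemma snoc_comp_cyc {r : ℕ} (k : Fin (r + 1)) (p : Fin r → Fin D) (j : Fin D) :
    (Fin.snoc p j : Fin (r + 1) → Fin D) ∘ (cyc k) = Fin.insertNth k j p := by
  funext l
  refine Fin.succAboveCases k ?_ (fun i => ?_) l
  · simp [Function.comp, Fin.insertNth_apply_same]
  · simp [Function.comp, Fin.insertNth_apply_succAbove]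

/-- product over `univ.erase k` via `succAbove` -/
lemma prod_erase_eq_succAbove {r : ℕ} (k : Fin (r + 1)) (g : Fin (r + 1) → ℝ) :
    ∏ l ∈ Finset.univ.erase k, g l = ∏ i : Fin r, g (k.succAbove i) := by
  rw [show Finset.univ.erase k = Finset.univ.image k.succAbove from ?_,
    Finset.prod_image (fun i _ j _ h => Fin.succAbove_right_injective h)]
  ext x
  simp only [Finset.mem_erase, Finset.mem_univ, and_true, Finset.mem_image, true_and]
  constructor
  · intro hx; exact Fin.exists_succAbove_eq hx
  · rintro ⟨i, rfl⟩; exact Fin.succAbove_ne k i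

/-- reindex a sum over `Fin (r+1) → Fin D` via `insertNth` at `k` -/
lemma sum_insertNth {r : ℕ} (k : Fin (r + 1)) (f : (Fin (r + 1) → Fin D) → ℝ) :
    ∑ idx : Fin (r + 1) → Fin D, f idx
      = ∑ p : Fin r → Fin D, ∑ j : Fin D, f (Fin.insertNth k j p) := by
  rw [← Equiv.sum_comp (Fin.insertNthEquiv (fun _ => Fin D) k) f]
  rw [Fintype.sum_prod_type, Finset.sum_comm]
  rfl

/-- The key reindexing lemma: contraction of a symmetric array against a weight on
one slot. -/
lemma sum_contract_single {r : ℕ} (c : (Fin (r + 1) → Fin D) → ℝ)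
    (hc : ∀ (idx : Fin (r + 1) → Fin D) (σ : Equiv.Perm (Fin (r + 1))), c (idx ∘ σ) = c idx)
    (w : Fin D → ℝ) (v : Vec D) :
    ∑ idx : Fin (r + 1) → Fin D, c idx *
        ∑ k, w (idx k) * ∏ l ∈ Finset.univ.erase k, v (idx l)
      = ((r : ℝ) + 1) * ∑ p : Fin r → Fin D, ∑ j,
          c (Fin.snoc p j) * w j * ∏ l, v (p l) := by
  have step : ∀ k : Fin (r + 1),
      ∑ idx : Fin (r + 1) → Fin D, c idx * (w (idx k) * ∏ l ∈ Finset.univ.erase k, v (idx l))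
        = ∑ p : Fin r → Fin D, ∑ j, c (Fin.snoc p j) * w j * ∏ l, v (p l) := by
    intro k
    rw [sum_insertNth k]
    refine Finset.sum_congr rfl fun p _ => Finset.sum_congr rfl fun j _ => ?_
    have h1 : c (Fin.insertNth k j p) = c (Fin.snoc p j) := by
      rw [← snoc_comp_cyc k p j, hc]
    have h2 : ∏ l ∈ Finset.univ.erase k, v ((Fin.insertNth k j p : Fin (r+1) → Fin D) l) = ∏ l, v (p l) := by
      rw [prod_erase_eq_succAbove]
      exact Finset.prod_congr rfl fun i _ => by rw [Fin.insertNth_apply_succAbove]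
    rw [h1, h2, Fin.insertNth_apply_same, mul_assoc]
  calc ∑ idx : Fin (r + 1) → Fin D, c idx *
        ∑ k, w (idx k) * ∏ l ∈ Finset.univ.erase k, v (idx l)
      = ∑ k : Fin (r + 1), ∑ idx : Fin (r + 1) → Fin D,
          c idx * (w (idx k) * ∏ l ∈ Finset.univ.erase k, v (idx l)) := by
        rw [Finset.sum_comm]
        exact Finset.sum_congr rfl fun idx _ => Finset.mul_sum _ _ _
    _ = ∑ k : Fin (r + 1), ∑ p : Fin r → Fin D, ∑ j,
          c (Fin.snoc p j) * w j * ∏ l, v (p l) :=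
        Finset.sum_congr rfl fun k _ => step k
    _ = ((r : ℝ) + 1) * ∑ p : Fin r → Fin D, ∑ j,
          c (Fin.snoc p j) * w j * ∏ l, v (p l) := by
        rw [Finset.sum_const, Finset.card_univ, Fintype.card_fin, nsmul_eq_mul]
        push_cast
        ring

end Stmt0Aux
namespace Stmt0Aux

variable {D : ℕ}

/-- symmetry descends along `snoc` -/
lemma symm_snoc {r : ℕ} (c : (Fin (r + 1) → Fin D) → ℝ)
    (hc : ∀ (idx : Fin (r + 1) → Fin D) (σ : Equiv.Perm (Fin (r + 1))), c (idx ∘ σ) = c idx)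
    (j : Fin D) :
    ∀ (p : Fin r → Fin D) (σ : Equiv.Perm (Fin r)),
      c (Fin.snoc (p ∘ σ) j) = c (Fin.snoc p j) := by
  intro p σ
  rw [← snoc_comp_extPerm σ p j, hc]

/-- polarization: a symmetric array whose polynomial vanishes identically is zero -/
lemma polarization : ∀ {r : ℕ} (c : (Fin r → Fin D) → ℝ),
    (∀ (idx : Fin r → Fin D) (σ : Equiv.Perm (Fin r)), c (idx ∘ σ) = c idx) →
    (∀ v : Vec D, ∑ idx : Fin r → Fin D, c idx * ∏ k, v (idx k) = 0) →
    ∀ idx, c idx = 0 := by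
  intro r
  induction r with
  | zero =>
      intro c _ h0 idx
      have := h0 0
      rw [Finset.sum_eq_single_of_mem idx (Finset.mem_univ idx)
        (fun b _ hb => absurd (Subsingleton.elim b idx) hb)] at this
      simpa using this
  | succ r ih =>
      intro c hc h0 idx
      -- it suffices to show `c (snoc p j) = 0` for all `p`, `j`
      suffices h : ∀ (j : Fin D) (p : Fin r → Fin D), c (Fin.snoc p j) = 0 by
        have := h (idx (Fin.last r)) (Fin.init idx)
        rwa [Fin.snoc_init_self] at this
      intro j
      -- differentiate `v ↦ Σ c idx Π v(idx k)` in direction `Pi.single j 1`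
      have key : ∀ v : Vec D,
          ∑ p : Fin r → Fin D, c (Fin.snoc p j) * ∏ l, v (p l) = 0 := by
        intro v
        set sgl : Vec D := Pi.single j 1 with hsgl
        set w : ℝ → Vec D := fun τ => v + τ • sgl with hw
        have hzero : (fun τ : ℝ => ∑ idx : Fin (r + 1) → Fin D,
            c idx * ∏ k, w τ (idx k)) = fun _ => (0 : ℝ) := funext fun τ => h0 (w τ)
        have hd0 : HasDerivAt (fun τ : ℝ => ∑ idx : Fin (r + 1) → Fin D,
            c idx * ∏ k, w τ (idx k)) 0 0 := by
          rw [hzero]; exact hasDerivAt_const 0 0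
        have hd1 : HasDerivAt (fun τ : ℝ => ∑ idx : Fin (r + 1) → Fin D,
            c idx * ∏ k, w τ (idx k))
            (∑ idx : Fin (r + 1) → Fin D, c idx *
              ∑ k, sgl (idx k) * ∏ l ∈ Finset.univ.erase k, w 0 (idx l)) 0 := by
          refine HasDerivAt.fun_sum fun idx _ => ?_
          have hp : HasDerivAt (fun τ : ℝ => ∏ k, w τ (idx k))
              (∑ k, (∏ l ∈ Finset.univ.erase k, w 0 (idx l)) • sgl (idx k))
              0 := by
            refine HasDerivAt.fun_finsetProd fun k _ => ?_
            have heqf : (fun τ : ℝ => w τ (idx k)) = fun τ => v (idx k) + sgl (idx k) * τ := by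
              funext τ; simp [hw, mul_comm]
            rw [heqf]
            simpa using ((hasDerivAt_id (0:ℝ)).const_mul (sgl (idx k))).const_add (v (idx k))
          have h2 := HasDerivAt.const_mul (c idx) hp
          have h3 : c idx * ∑ k, (∏ l ∈ Finset.univ.erase k, w 0 (idx l)) • sgl (idx k)
              = c idx * ∑ k, sgl (idx k) * ∏ l ∈ Finset.univ.erase k, w 0 (idx l) := by
            congr 1
            exact Finset.sum_congr rfl fun k _ => by rw [smul_eq_mul, mul_comm]
          rw [h3] at h2
          exact h2
        have heq := hd1.unique hd0
        have hv0 : ∀ a, w 0 a = v a := fun a => by simp [hw]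
        rw [show (∑ idx : Fin (r + 1) → Fin D, c idx *
              ∑ k, sgl (idx k) * ∏ l ∈ Finset.univ.erase k, w 0 (idx l))
            = ∑ idx : Fin (r + 1) → Fin D, c idx *
              ∑ k, sgl (idx k) * ∏ l ∈ Finset.univ.erase k, v (idx l) from
          Finset.sum_congr rfl fun idx _ => by
            congr 1
            exact Finset.sum_congr rfl fun k _ => by
              congr 1
              exact Finset.prod_congr rfl fun l _ => hv0 (idx l)] at heq
        rw [sum_contract_single c hc (fun a => sgl a) v] at heq
        have hr1 : ((r : ℝ) + 1) ≠ 0 := by positivity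
        have heq2 : ∑ p : Fin r → Fin D, ∑ j',
            c (Fin.snoc p j') * sgl j' * ∏ l, v (p l) = 0 :=
          (mul_eq_zero.1 heq).resolve_left hr1
        rw [← heq2]
        refine Finset.sum_congr rfl fun p _ => ?_
        rw [Finset.sum_eq_single_of_mem j (Finset.mem_univ j)
          (fun b _ hb => by simp [hsgl, Pi.single_apply, hb])]
        simp [hsgl]
      exact ih (fun p => c (Fin.snoc p j)) (fun p σ => symm_snoc c hc j p σ) key

/-- homogeneous components of a vanishing polynomial in `v` vanish -/
lemma homog_sep {N : ℕ} (c : (r : ℕ) → (Fin r → Fin D) → ℝ)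
    (h : ∀ v : Vec D, ∑ r ∈ Finset.range N, ctr r (c r) v = 0) :
    ∀ r, r < N → ∀ v : Vec D, ctr r (c r) v = 0 := by
  intro r hr v
  set p : Polynomial ℝ := ∑ s ∈ Finset.range N, Polynomial.C (ctr s (c s) v) * Polynomial.X ^ s
    with hp
  have hev : ∀ x : ℝ, p.eval x = 0 := by
    intro x
    have := h (x • v)
    rw [show ∑ s ∈ Finset.range N, ctr s (c s) (x • v)
        = ∑ s ∈ Finset.range N, ctr s (c s) v * x ^ s from
      Finset.sum_congr rfl fun s _ => ?_] at this
    · simpa [hp, Polynomial.eval_finset_sum] using this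
    · unfold ctr
      rw [Finset.sum_mul]
      refine Finset.sum_congr rfl fun idx _ => ?_
      have : ∏ k, (x • v) (idx k) = x ^ s * ∏ k, v (idx k) := by
        simp [Finset.prod_mul_distrib]
      rw [this]; ring
  have hp0 : p = 0 := Polynomial.funext fun x => by rw [hev x, Polynomial.eval_zero]
  have := congrArg (fun q => Polynomial.coeff q r) hp0
  simp only [hp, Polynomial.finset_sum_coeff, Polynomial.coeff_C_mul, Polynomial.coeff_X_pow,
    Polynomial.coeff_zero, mul_ite, mul_one, mul_zero] at this
  rwa [Finset.sum_ite_eq (Finset.range N) r (fun s => ctr s (c s) v), if_pos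
    (Finset.mem_range.2 hr)] at this

end Stmt0Aux
namespace Stmt0Aux

variable {D : ℕ}

open Set

/-- chain rule for `τ ↦ F (τ, q τ)` -/
lemma chainF (F : ℝ × Vec D → ℝ) (hF : ContDiff ℝ (⊤ : ℕ∞) F)
    (q v : ℝ → Vec D) (t : ℝ) (hq : ∀ a, HasDerivAt (fun τ => q τ a) (v t a) t) :
    HasDerivAt (fun τ => F (τ, q τ))
      (deriv (fun τ => F (τ, q t)) t + ∑ j, pd j (fun p => F (t, p)) (q t) * v t j) t := by
  set L := fderiv ℝ F (t, q t) with hL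
  have hFd : HasFDerivAt F L (t, q t) := (hF.differentiable (by simp) (t, q t)).hasFDerivAt
  have hγ : HasDerivAt (fun τ => (τ, q τ)) ((1 : ℝ), v t) t :=
    (hasDerivAt_id t).prodMk (hasDerivAt_pi.2 hq)
  have hcomp : HasDerivAt (fun τ => F (τ, q τ)) (L (1, v t)) t :=
    hFd.comp_hasDerivAt t hγ
  have h1 : HasDerivAt (fun τ => F (τ, q t)) (L (1, 0)) t :=
    hFd.comp_hasDerivAt t ((hasDerivAt_id t).prodMk (hasDerivAt_const t (q t)))
  have h2 : ∀ j, pd j (fun p => F (t, p)) (q t) = L (0, Pi.single j 1) := by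
    intro j
    have hsec : HasFDerivAt (fun p => F (t, p))
        (L.comp (ContinuousLinearMap.inr ℝ ℝ (Vec D))) (q t) :=
      hFd.comp (q t) (hasFDerivAt_prodMk_right t (q t))
    unfold pd
    rw [hsec.fderiv]
    simp
  have hsplit : L (1, v t) = L (1, 0) + ∑ j, v t j • L (0, Pi.single j 1) := by
    have hv : ((0 : ℝ), v t) = ∑ j, v t j • ((0 : ℝ), (Pi.single j 1 : Vec D)) := by
      rw [Prod.ext_iff]
      constructor
      · simp [Prod.fst_sum]
      · simp only [Prod.snd_sum, Prod.smul_snd]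
        funext a
        rw [Finset.sum_apply]
        simp [Pi.single_apply]
    have h10 : ((1 : ℝ), v t) = ((1 : ℝ), (0 : Vec D)) + ((0 : ℝ), v t) := by simp
    rw [h10, map_add, hv, map_sum]
    congr 1
    refine Finset.sum_congr rfl fun x _ => ?_
    exact L.map_smul _ _
  rw [hsplit] at hcomp
  rw [h1.deriv]
  refine hcomp.congr_deriv ?_
  congr 1
  exact Finset.sum_congr rfl fun j _ => by rw [h2 j, smul_eq_mul, mul_comm]

/-- local existence of solutions of the second-order system -/
lemma exists_solution (Γ : Conn D) (Q : Vec D → Fin D → ℝ)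
    (hΓ : ∀ a b c, ContDiff ℝ (⊤ : ℕ∞) fun q => Γ q a b c)
    (hQ : ∀ a, ContDiff ℝ (⊤ : ℕ∞) fun q => Q q a)
    (t₀ : ℝ) (q₀ v₀ : Vec D) :
    ∃ ε > (0 : ℝ), ∃ q v : ℝ → Vec D,
      q t₀ = q₀ ∧ v t₀ = v₀ ∧
      IsSolutionOn Γ Q (Set.Ioo (t₀ - ε) (t₀ + ε)) q v := by
  set V : Vec D × Vec D → Vec D × Vec D := fun x =>
    (x.2, fun a => -(∑ b, ∑ c, Γ x.1 a b c * x.2 b * x.2 c) - Q x.1 a) with hV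
  have hVc : ContDiff ℝ (⊤ : ℕ∞) V := by
    refine ContDiff.prodMk contDiff_snd ?_
    refine contDiff_pi.2 fun a => ContDiff.sub ?_ ((hQ a).comp contDiff_fst)
    refine ContDiff.neg ?_
    refine ContDiff.sum fun b _ => ContDiff.sum fun c _ => ?_
    have h2 : ∀ i : Fin D, ContDiff ℝ (⊤ : ℕ∞) fun x : Vec D × Vec D => x.2 i := fun i =>
      (ContinuousLinearMap.proj i : Vec D →L[ℝ] ℝ).contDiff.comp contDiff_snd
    exact (((hΓ a b c).comp contDiff_fst).mul (h2 b)).mul (h2 c)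
  obtain ⟨f, hf0, ε, hε, hf⟩ :=
    ((hVc.of_le (mod_cast le_top)).contDiffAt (x := (q₀, v₀))).exists_forall_mem_closedBall_exists_eq_forall_mem_Ioo_hasDerivAt₀ t₀
  refine ⟨ε, hε, fun τ => (f τ).1, fun τ => (f τ).2, by simp [hf0], by simp [hf0], ?_⟩
  intro t ht a
  have h := hf t ht
  have h1 : HasDerivAt (fun τ => (f τ).1) (V (f t)).1 t :=
    (ContinuousLinearMap.fst ℝ (Vec D) (Vec D)).hasFDerivAt.comp_hasDerivAt t h
  have h2 : HasDerivAt (fun τ => (f τ).2) (V (f t)).2 t :=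
    (ContinuousLinearMap.snd ℝ (Vec D) (Vec D)).hasFDerivAt.comp_hasDerivAt t h
  exact ⟨hasDerivAt_pi.1 h1 a, hasDerivAt_pi.1 h2 a⟩

/-- constancy from vanishing derivative on an open interval -/
lemma const_of_deriv_zero {g : ℝ → ℝ} {a b : ℝ}
    (hg : ∀ t ∈ Ioo a b, HasDerivAt g 0 t) :
    ∀ t₁ ∈ Ioo a b, ∀ t₂ ∈ Ioo a b, g t₁ = g t₂ := by
  have key : ∀ t₁ ∈ Ioo a b, ∀ t₂ ∈ Ioo a b, t₁ ≤ t₂ → g t₂ = g t₁ := by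
    intro t₁ h₁ t₂ h₂ hle
    have hsub : Icc t₁ t₂ ⊆ Ioo a b := fun x hx =>
      ⟨lt_of_lt_of_le h₁.1 hx.1, lt_of_le_of_lt hx.2 h₂.2⟩
    refine constant_of_has_deriv_right_zero ?_ ?_ t₂ (right_mem_Icc.2 hle)
    · exact fun x hx => (hg x (hsub hx)).continuousAt.continuousWithinAt
    · exact fun x hx => (hg x (hsub (Ico_subset_Icc_self hx))).hasDerivWithinAt
  intro t₁ h₁ t₂ h₂
  rcases le_total t₁ t₂ with h | h
  · exact (key t₁ h₁ t₂ h₂ h).symm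
  · exact key t₂ h₂ t₁ h₁ h

end Stmt0Aux
namespace Stmt0Aux

variable {D : ℕ}

/-- sum over `(p, s)` is invariant under the involution `(p,s) ↦ (update p k s, p k)` -/
lemma sum_update {r : ℕ} (k : Fin r) (f : (Fin r → Fin D) → Fin D → ℝ) :
    ∑ p : Fin r → Fin D, ∑ s : Fin D, f (Function.update p k s) (p k)
      = ∑ p : Fin r → Fin D, ∑ s : Fin D, f p s := by
  have hinv : Function.Involutive
      (fun x : (Fin r → Fin D) × Fin D => (Function.update x.1 k x.2, x.1 k)) := by
    intro x
    simp [Function.update_idem]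
  have := Equiv.sum_comp hinv.toPerm (fun x : (Fin r → Fin D) × Fin D => f x.1 x.2)
  simp only [Function.Involutive.coe_toPerm] at this
  calc ∑ p : Fin r → Fin D, ∑ s : Fin D, f (Function.update p k s) (p k)
      = ∑ x : (Fin r → Fin D) × Fin D, f (Function.update x.1 k x.2) (x.1 k) := by
        rw [Fintype.sum_prod_type]
    _ = ∑ x : (Fin r → Fin D) × Fin D, f x.1 x.2 := this
    _ = ∑ p : Fin r → Fin D, ∑ s : Fin D, f p s := by rw [Fintype.sum_prod_type]

/-- splitting of a full product after an update -/
lemma prod_update {r : ℕ} (k : Fin r) (p : Fin r → Fin D) (s : Fin D) (V : Vec D) :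
    ∏ l, V (Function.update p k s l) = V s * ∏ l ∈ Finset.univ.erase k, V (p l) := by
  rw [← Finset.mul_prod_erase Finset.univ (fun l => V (Function.update p k s l))
    (Finset.mem_univ k)]
  rw [Function.update_self]
  congr 1
  refine Finset.prod_congr rfl fun l hl => ?_
  rw [Function.update_of_ne (Finset.mem_erase.1 hl).1]

/-- the contraction of the covariant derivative against velocities -/
lemma cov_contract {r : ℕ} (Γ : Conn D) (T : Tens D r) (q V : Vec D) :
    ctr (r + 1) (covTens Γ T q) V
      = (∑ p : Fin r → Fin D, (∑ j, pd j (fun x => T x p) q * V j) * ∏ k, V (p k))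
        - ∑ p : Fin r → Fin D, T q p * ∑ k : Fin r, (∏ l ∈ Finset.univ.erase k, V (p l)) *
            (∑ b, ∑ c, Γ q (p k) b c * V b * V c) := by
  unfold ctr covTens
  rw [show ∀ X Y : (Fin (r+1) → Fin D) → ℝ,
      ∑ idx : Fin (r+1) → Fin D, (X idx - Y idx) * ∏ k, V (idx k)
        = (∑ idx : Fin (r+1) → Fin D, X idx * ∏ k, V (idx k))
          - ∑ idx : Fin (r+1) → Fin D, Y idx * ∏ k, V (idx k) from fun X Y => by
    rw [← Finset.sum_sub_distrib]
    exact Finset.sum_congr rfl fun idx _ => by ring]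
  congr 1
  -- partial-derivative part
  · rw [sum_snoc (fun idx => pd (idx (Fin.last r)) (fun p => T p fun k => idx k.castSucc) q
      * ∏ k, V (idx k))]
    refine Finset.sum_congr rfl fun p _ => ?_
    rw [Finset.sum_mul]
    refine Finset.sum_congr rfl fun j _ => ?_
    have h1 : (fun k : Fin r => (Fin.snoc p j : Fin (r+1) → Fin D) k.castSucc) = p := by
      funext k; rw [Fin.snoc_castSucc]
    have h2 : ∏ k : Fin (r + 1), V ((Fin.snoc p j : Fin (r+1) → Fin D) k)
        = (∏ k : Fin r, V (p k)) * V j := by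
      rw [Fin.prod_univ_castSucc]
      simp
    rw [Fin.snoc_last, h1, h2]
    ring
  -- connection part
  · rw [sum_snoc (fun idx => (∑ k : Fin r, ∑ s, Γ q s (idx k.castSucc) (idx (Fin.last r)) *
      T q (Function.update (fun l => idx l.castSucc) k s)) * ∏ k, V (idx k))]
    have main : ∀ p : Fin r → Fin D, ∀ j,
        (∑ k : Fin r, ∑ s, Γ q s (p k) j * T q (Function.update p k s))
          * ((∏ k : Fin r, V (p k)) * V j)
        = ∑ k : Fin r, ∑ s, Γ q s (p k) j * T q (Function.update p k s)
            * (∏ l : Fin r, V (p l)) * V j := by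
      intro p j
      rw [Finset.sum_mul]
      refine Finset.sum_congr rfl fun k _ => ?_
      rw [Finset.sum_mul]
      exact Finset.sum_congr rfl fun s _ => by ring
    calc ∑ p : Fin r → Fin D, ∑ j, (∑ k : Fin r, ∑ s,
            Γ q s ((Fin.snoc p j : Fin (r+1) → Fin D) k.castSucc)
              ((Fin.snoc p j : Fin (r+1) → Fin D) (Fin.last r)) *
            T q (Function.update (fun l => (Fin.snoc p j : Fin (r+1) → Fin D) l.castSucc) k s))
          * ∏ k : Fin (r+1), V ((Fin.snoc p j : Fin (r+1) → Fin D) k)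
        = ∑ p : Fin r → Fin D, ∑ j, ∑ k : Fin r, ∑ s,
            Γ q s (p k) j * T q (Function.update p k s) * (∏ l : Fin r, V (p l)) * V j := by
          refine Finset.sum_congr rfl fun p _ => Finset.sum_congr rfl fun j _ => ?_
          have h1 : (fun l : Fin r => (Fin.snoc p j : Fin (r+1) → Fin D) l.castSucc) = p := by
            funext l; rw [Fin.snoc_castSucc]
          have h2 : ∏ k : Fin (r + 1), V ((Fin.snoc p j : Fin (r+1) → Fin D) k)
              = (∏ k : Fin r, V (p k)) * V j := by
            rw [Fin.prod_univ_castSucc]; simp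
          simp only [h1, h2, Fin.snoc_last, Fin.snoc_castSucc]
          exact main p j
      _ = ∑ j, ∑ k : Fin r, ∑ p : Fin r → Fin D, ∑ s,
            Γ q s (p k) j * T q (Function.update p k s) * (∏ l : Fin r, V (p l)) * V j := by
          rw [Finset.sum_comm]
          exact Finset.sum_congr rfl fun j _ => Finset.sum_comm
      _ = ∑ j, ∑ k : Fin r, ∑ p : Fin r → Fin D, ∑ s,
            Γ q (p k) s j * T q p * (V s * ∏ l ∈ Finset.univ.erase k, V (p l)) * V j := by
          refine Finset.sum_congr rfl fun j _ => Finset.sum_congr rfl fun k _ => ?_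
          have hupd := sum_update k (fun P S => Γ q (P k) S j * T q P *
            (∏ l, V (Function.update P k S l)) * V j)
          have hl : ∑ p : Fin r → Fin D, ∑ s,
              Γ q s (p k) j * T q (Function.update p k s) * (∏ l : Fin r, V (p l)) * V j
              = ∑ p : Fin r → Fin D, ∑ s, (fun P S => Γ q (P k) S j * T q P *
                  (∏ l, V (Function.update P k S l)) * V j) (Function.update p k s) (p k) := by
            refine Finset.sum_congr rfl fun p _ => Finset.sum_congr rfl fun s _ => ?_
            simp only [Function.update_self, Function.update_idem, Function.update_eq_self]
          rw [hl, hupd]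
          refine Finset.sum_congr rfl fun p _ => Finset.sum_congr rfl fun s _ => ?_
          rw [prod_update]
      _ = ∑ p : Fin r → Fin D, ∑ k : Fin r, ∑ s, ∑ j,
            Γ q (p k) s j * T q p * (V s * ∏ l ∈ Finset.univ.erase k, V (p l)) * V j := by
          set X : Fin D → Fin r → (Fin r → Fin D) → Fin D → ℝ := fun j k p s =>
            Γ q (p k) s j * T q p * (V s * ∏ l ∈ Finset.univ.erase k, V (p l)) * V j with hX
          calc ∑ j, ∑ k : Fin r, ∑ p : Fin r → Fin D, ∑ s, X j k p s
              = ∑ k : Fin r, ∑ j, ∑ p : Fin r → Fin D, ∑ s, X j k p s := Finset.sum_comm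
            _ = ∑ k : Fin r, ∑ p : Fin r → Fin D, ∑ j, ∑ s, X j k p s :=
                Finset.sum_congr rfl fun k _ => Finset.sum_comm
            _ = ∑ k : Fin r, ∑ p : Fin r → Fin D, ∑ s, ∑ j, X j k p s :=
                Finset.sum_congr rfl fun k _ => Finset.sum_congr rfl fun p _ => Finset.sum_comm
            _ = ∑ p : Fin r → Fin D, ∑ k : Fin r, ∑ s, ∑ j, X j k p s := Finset.sum_comm
      _ = ∑ p : Fin r → Fin D, T q p * ∑ k : Fin r,
            (∏ l ∈ Finset.univ.erase k, V (p l)) * (∑ b, ∑ c, Γ q (p k) b c * V b * V c) := by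
          refine Finset.sum_congr rfl fun p _ => ?_
          rw [Finset.mul_sum]
          refine Finset.sum_congr rfl fun k _ => ?_
          simp only [Finset.mul_sum, Finset.sum_mul]
          refine Finset.sum_congr rfl fun s _ => Finset.sum_congr rfl fun j _ => by ring

end Stmt0Aux
namespace Stmt0Aux

variable {D : ℕ}

lemma Q_contract {r : ℕ} (c : (Fin (r + 1) → Fin D) → ℝ)
    (hc : ∀ (idx : Fin (r + 1) → Fin D) (σ : Equiv.Perm (Fin (r + 1))), c (idx ∘ σ) = c idx)
    (w : Fin D → ℝ) (V : Vec D) :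
    ∑ idx : Fin (r + 1) → Fin D, c idx *
        ∑ k, (∏ l ∈ Finset.univ.erase k, V (idx l)) * w (idx k)
      = ((r : ℝ) + 1) * ∑ p : Fin r → Fin D, ∑ j,
          c (Fin.snoc p j) * w j * ∏ l, V (p l) := by
  rw [← sum_contract_single c hc w V]
  refine Finset.sum_congr rfl fun idx _ => ?_
  congr 1
  exact Finset.sum_congr rfl fun k _ => mul_comm _ _

/-- The PDE left-hand sides, as a family of arrays. -/
def EE (Γ : Conn D) (Q : Vec D → Fin D → ℝ) (M : (r : ℕ) → ℝ → Tens D r) (t : ℝ) (q : Vec D) :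
    (r : ℕ) → (Fin r → Fin D) → ℝ
  | 0 => fun idx => deriv (fun τ => M 0 τ q idx) t
      - (1 : ℝ) * ∑ j, M 1 t q (Fin.snoc idx j) * Q q j
  | (r + 1) => fun idx => deriv (fun τ => M (r + 1) τ q idx) t
      + symT (covTens Γ (M r t)) q idx
      - ((r + 2 : ℕ) : ℝ) * ∑ j, M (r + 2) t q (Fin.snoc idx j) * Q q j

section AssembleDefs

variable (Γ : Conn D) (Q : Vec D → Fin D → ℝ) (M : (r : ℕ) → ℝ → Tens D r)
  (t : ℝ) (qt V : Vec D)

def Aa (r : ℕ) : ℝ := ∑ idx : Fin r → Fin D,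
  deriv (fun τ => M r τ qt idx) t * ∏ k, V (idx k)

def Bb (r : ℕ) : ℝ := ∑ idx : Fin r → Fin D,
  (∑ j, pd j (fun p => M r t p idx) qt * V j) * ∏ k, V (idx k)

def Gg (r : ℕ) : ℝ := ∑ idx : Fin r → Fin D,
  M r t qt idx * ∑ k, (∏ l ∈ Finset.univ.erase k, V (idx l)) *
    (∑ b, ∑ c, Γ qt (idx k) b c * V b * V c)

def Ff (r : ℕ) : ℝ := ∑ idx : Fin r → Fin D,
  M r t qt idx * ∑ k, (∏ l ∈ Finset.univ.erase k, V (idx l)) * Q qt (idx k)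

def QTa (r : ℕ) : ℝ := ((r : ℝ) + 1) * ∑ p : Fin r → Fin D, ∑ j,
  M (r + 1) t qt (Fin.snoc p j) * Q qt j * ∏ l, V (p l)

def CTa (r : ℕ) : ℝ := ctr (r + 1) (covTens Γ (M r t) qt) V

end AssembleDefs

/-- The main algebraic identity. -/
lemma assemble {m : ℕ} (Γ : Conn D) (Q : Vec D → Fin D → ℝ) (M : (r : ℕ) → ℝ → Tens D r)
    (hMsym : ∀ r t, IsSymTens (M r t))
    (hMzero : ∀ r, m < r → ∀ t, M r t = fun _ _ => 0)
    (t : ℝ) (qt V : Vec D) :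
    ∑ r ∈ Finset.range (m + 1), ∑ idx : Fin r → Fin D,
      ((deriv (fun τ => M r τ qt idx) t + ∑ j, pd j (fun p => M r t p idx) qt * V j)
          * ∏ k, V (idx k)
        + M r t qt idx * ∑ k, (∏ l ∈ Finset.univ.erase k, V (idx l)) *
            (-(∑ b, ∑ c, Γ qt (idx k) b c * V b * V c) - Q qt (idx k)))
      = ∑ r ∈ Finset.range (m + 2), ctr r (EE Γ Q M t qt r) V := by
  -- Step 1: expand the left-hand side
  have step1 : ∑ r ∈ Finset.range (m + 1), ∑ idx : Fin r → Fin D,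
      ((deriv (fun τ => M r τ qt idx) t + ∑ j, pd j (fun p => M r t p idx) qt * V j)
          * ∏ k, V (idx k)
        + M r t qt idx * ∑ k, (∏ l ∈ Finset.univ.erase k, V (idx l)) *
            (-(∑ b, ∑ c, Γ qt (idx k) b c * V b * V c) - Q qt (idx k)))
      = ∑ r ∈ Finset.range (m + 1),
          (Aa M t qt V r + Bb M t qt V r - Gg Γ M t qt V r - Ff Q M t qt V r) := by
    refine Finset.sum_congr rfl fun r _ => ?_
    unfold Aa Bb Gg Ff
    rw [← Finset.sum_add_distrib, ← Finset.sum_sub_distrib, ← Finset.sum_sub_distrib]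
    refine Finset.sum_congr rfl fun idx _ => ?_
    have hin : ∑ k, (∏ l ∈ Finset.univ.erase k, V (idx l)) *
          (-(∑ b, ∑ c, Γ qt (idx k) b c * V b * V c) - Q qt (idx k))
        = -(∑ k, (∏ l ∈ Finset.univ.erase k, V (idx l)) *
              (∑ b, ∑ c, Γ qt (idx k) b c * V b * V c))
          - ∑ k, (∏ l ∈ Finset.univ.erase k, V (idx l)) * Q qt (idx k) := by
      rw [← Finset.sum_neg_distrib, ← Finset.sum_sub_distrib]
      exact Finset.sum_congr rfl fun k _ => by ring
    rw [hin]
    ring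
  rw [step1]
  -- Step 2: covariant-derivative part
  have step2 : ∀ r, Bb M t qt V r - Gg Γ M t qt V r = CTa Γ M t qt V r := by
    intro r
    unfold Bb Gg CTa
    exact (cov_contract Γ (M r t) qt V).symm
  -- Step 3: force part
  have step3 : ∀ r, Ff Q M t qt V (r + 1) = QTa Q M t qt V r := by
    intro r
    unfold Ff QTa
    exact Q_contract (M (r + 1) t qt) (fun idx σ => hMsym (r + 1) t qt idx σ) (Q qt) V
  have hFf0 : Ff Q M t qt V 0 = 0 := by
    unfold Ff
    exact Finset.sum_eq_zero fun idx _ => by simp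
  have hQTz : ∀ r, m ≤ r → QTa Q M t qt V r = 0 := by
    intro r hr
    unfold QTa
    rw [Finset.sum_eq_zero fun (p : Fin r → Fin D) _ => Finset.sum_eq_zero fun j _ => by
      rw [hMzero (r + 1) (by omega) t]; ring]
    ring
  have hAm : Aa M t qt V (m + 1) = 0 := by
    unfold Aa
    refine Finset.sum_eq_zero fun idx _ => ?_
    have : (fun τ => M (m + 1) τ qt idx) = fun _ => (0 : ℝ) := by
      funext τ; rw [hMzero (m + 1) (by omega) τ]
    rw [this, deriv_const]
    ring
  -- Step 4: expansion of the right-hand side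
  have step4 : ∀ r, ctr (r + 1) (EE Γ Q M t qt (r + 1)) V
      = Aa M t qt V (r + 1) + CTa Γ M t qt V r - QTa Q M t qt V (r + 1) := by
    intro r
    have hs := ctr_symT (covTens Γ (M r t)) qt V
    unfold Aa CTa QTa
    rw [← hs]
    unfold ctr
    simp only [EE]
    rw [Finset.mul_sum, ← Finset.sum_add_distrib, ← Finset.sum_sub_distrib]
    refine Finset.sum_congr rfl fun idx _ => ?_
    rw [sub_mul, add_mul, mul_assoc, Finset.sum_mul]
    push_cast
    ring
  have step40 : ctr 0 (EE Γ Q M t qt 0) V = Aa M t qt V 0 - QTa Q M t qt V 0 := by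
    unfold Aa QTa ctr
    simp only [EE]
    rw [Finset.mul_sum, ← Finset.sum_sub_distrib]
    refine Finset.sum_congr rfl fun idx _ => ?_
    rw [sub_mul, mul_assoc, Finset.sum_mul]
    push_cast
    ring
  -- final assembly
  have hFsum : ∑ r ∈ Finset.range (m + 1), Ff Q M t qt V r
      = ∑ r ∈ Finset.range (m + 1), QTa Q M t qt V r := by
    rw [Finset.sum_range_succ' (fun r => Ff Q M t qt V r) m, hFf0, add_zero,
      Finset.sum_range_succ (fun r => QTa Q M t qt V r) m, hQTz m le_rfl, add_zero]
    exact Finset.sum_congr rfl fun r _ => step3 r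
  have hA2 : ∑ r ∈ Finset.range (m + 1), Aa M t qt V (r + 1) + Aa M t qt V 0
      = ∑ r ∈ Finset.range (m + 1), Aa M t qt V r := by
    rw [← Finset.sum_range_succ' (fun r => Aa M t qt V r) (m + 1),
      Finset.sum_range_succ (fun r => Aa M t qt V r) (m + 1), hAm, add_zero]
  have hQ2 : ∑ r ∈ Finset.range (m + 1), QTa Q M t qt V (r + 1) + QTa Q M t qt V 0
      = ∑ r ∈ Finset.range (m + 1), QTa Q M t qt V r := by
    rw [← Finset.sum_range_succ' (fun r => QTa Q M t qt V r) (m + 1),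
      Finset.sum_range_succ (fun r => QTa Q M t qt V r) (m + 1),
      hQTz (m + 1) (by omega), add_zero]
  have hR : ∑ r ∈ Finset.range (m + 2), ctr r (EE Γ Q M t qt r) V
      = (∑ r ∈ Finset.range (m + 1), Aa M t qt V (r + 1) + Aa M t qt V 0)
        + ∑ r ∈ Finset.range (m + 1), CTa Γ M t qt V r
        - (∑ r ∈ Finset.range (m + 1), QTa Q M t qt V (r + 1) + QTa Q M t qt V 0) := by
    rw [Finset.sum_range_succ' (fun r => ctr r (EE Γ Q M t qt r) V) (m + 1), step40,
      Finset.sum_congr rfl (fun r _ => step4 r), Finset.sum_sub_distrib,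
      Finset.sum_add_distrib]
    ring
  have hL : ∑ r ∈ Finset.range (m + 1),
      (Aa M t qt V r + Bb M t qt V r - Gg Γ M t qt V r - Ff Q M t qt V r)
      = ∑ r ∈ Finset.range (m + 1), Aa M t qt V r
        + ∑ r ∈ Finset.range (m + 1), CTa Γ M t qt V r
        - ∑ r ∈ Finset.range (m + 1), QTa Q M t qt V r := by
    rw [Finset.sum_congr rfl (fun r _ => show
        Aa M t qt V r + Bb M t qt V r - Gg Γ M t qt V r - Ff Q M t qt V r
        = (Aa M t qt V r + CTa Γ M t qt V r) - Ff Q M t qt V r from by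
      rw [← step2 r]; ring), Finset.sum_sub_distrib, Finset.sum_add_distrib, hFsum]
  rw [hL, hR, ← hA2, ← hQ2]

end Stmt0Aux
namespace Stmt0Aux

variable {D : ℕ}

open Set

lemma keyDeriv {m : ℕ} (Γ : Conn D) (Q : Vec D → Fin D → ℝ) (M : (r : ℕ) → ℝ → Tens D r)
    (hMsym : ∀ r t, IsSymTens (M r t))
    (hMsm : ∀ (r : ℕ) (idx : Fin r → Fin D),
      ContDiff ℝ (⊤ : ℕ∞) fun p : ℝ × Vec D => M r p.1 p.2 idx)
    (hMzero : ∀ r, m < r → ∀ t, M r t = fun _ _ => 0)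
    (q v : ℝ → Vec D) (t : ℝ)
    (hsol : ∀ a : Fin D, HasDerivAt (fun τ => q τ a) (v t a) t ∧
      HasDerivAt (fun τ => v τ a)
        (-(∑ b, ∑ c, Γ (q t) a b c * v t b * v t c) - Q (q t) a) t) :
    HasDerivAt (fun τ => ∑ r ∈ Finset.range (m + 1), ∑ idx : Fin r → Fin D,
        M r τ (q τ) idx * ∏ k, v τ (idx k))
      (∑ r ∈ Finset.range (m + 2), ctr r (EE Γ Q M t (q t) r) (v t)) t := by
  rw [← assemble Γ Q M hMsym hMzero t (q t) (v t)]
  refine HasDerivAt.fun_sum fun r _ => HasDerivAt.fun_sum fun idx _ => ?_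
  have h1 := chainF (fun p : ℝ × Vec D => M r p.1 p.2 idx) (hMsm r idx) q v t
    (fun a => (hsol a).1)
  have h2 : HasDerivAt (fun τ => ∏ k, v τ (idx k))
      (∑ k, (∏ l ∈ Finset.univ.erase k, v t (idx l)) *
        (-(∑ b, ∑ c, Γ (q t) (idx k) b c * v t b * v t c) - Q (q t) (idx k))) t := by
    have := HasDerivAt.fun_finsetProd (u := (Finset.univ : Finset (Fin r)))
      (f := fun k τ => v τ (idx k))
      (f' := fun k => -(∑ b, ∑ c, Γ (q t) (idx k) b c * v t b * v t c) - Q (q t) (idx k))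
      (fun k _ => (hsol (idx k)).2)
    simpa [smul_eq_mul] using this
  exact h1.mul h2

/-- symmetry of the PDE arrays -/
lemma EE_symm (Γ : Conn D) (Q : Vec D → Fin D → ℝ) (M : (r : ℕ) → ℝ → Tens D r)
    (hMsym : ∀ r t, IsSymTens (M r t)) (t : ℝ) (q : Vec D) :
    ∀ (r : ℕ) (idx : Fin r → Fin D) (σ : Equiv.Perm (Fin r)),
      EE Γ Q M t q r (idx ∘ σ) = EE Γ Q M t q r idx := by
  intro r idx σ
  match r with
  | 0 =>
      have : idx ∘ σ = idx := funext fun x => x.elim0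
      rw [this]
  | (r + 1) =>
      simp only [EE]
      have h1 : (fun τ => M (r + 1) τ q (idx ∘ σ)) = fun τ => M (r + 1) τ q idx :=
        funext fun τ => hMsym (r + 1) τ q idx σ
      have h2 : symT (covTens Γ (M r t)) q (idx ∘ σ) = symT (covTens Γ (M r t)) q idx := by
        unfold symT
        congr 1
        have hre := Equiv.sum_comp (Equiv.mulLeft σ)
          (fun τ : Equiv.Perm (Fin (r + 1)) => covTens Γ (M r t) q (idx ∘ τ))
        simp only [Equiv.coe_mulLeft] at hre
        rw [← hre]
        refine Finset.sum_congr rfl fun σ' _ => ?_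
        congr 1
      have h3 : ∑ j, M (r + 2) t q (Fin.snoc (idx ∘ σ) j) * Q q j
          = ∑ j, M (r + 2) t q (Fin.snoc idx j) * Q q j := by
        refine Finset.sum_congr rfl fun j _ => ?_
        rw [symm_snoc (M (r + 2) t q) (fun a τ => hMsym (r + 2) t q a τ) j idx σ]
      rw [h1, h2, h3]

end Stmt0Aux

/-- `I = Σ_{r=0}^m M_{i₁...i_r}(t,q) q̇^{i₁}⋯q̇^{i_r}` is a first
integral of `q̈^a = −Γ^a_{bc} q̇^b q̇^c − Q^a` if and only if the system of PDEs
`∂_t M_{i₁...i_r} + M_{(i₁...i_{r−1}|i_r)} − (r+1) M_{i₁...i_r i_{r+1}} Q^{i_{r+1}} = 0`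
holds identically for `r = 0, 1, …, m, m+1` (with `M_{i₁...i_r} = 0` for `r > m`,
and with the covariant-derivative term absent when `r = 0`). -/
theorem stmt0 {D m : ℕ} (hD : 1 ≤ D)
    (Γ : Conn D) (Q : Vec D → Fin D → ℝ)
    (hΓsym : ∀ q a b c, Γ q a b c = Γ q a c b)
    (hΓ : ∀ a b c, ContDiff ℝ (⊤ : ℕ∞) fun q => Γ q a b c)
    (hQ : ∀ a, ContDiff ℝ (⊤ : ℕ∞) fun q => Q q a)
    (M : (r : ℕ) → ℝ → Tens D r)
    (hMsym : ∀ r t, IsSymTens (M r t))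
    (hMsm : ∀ (r : ℕ) (idx : Fin r → Fin D),
      ContDiff ℝ (⊤ : ℕ∞) fun p : ℝ × Vec D => M r p.1 p.2 idx)
    (hMzero : ∀ r, m < r → ∀ t, M r t = fun _ _ => 0) :
    FirstIntegral Γ Q (fun t q v =>
      ∑ r ∈ Finset.range (m + 1), ∑ idx : Fin r → Fin D,
        M r t q idx * ∏ k : Fin r, v (idx k)) ↔
    ((∀ (t : ℝ) (q : Vec D) (idx : Fin 0 → Fin D),
        deriv (fun τ => M 0 τ q idx) t
          - (1 : ℝ) * ∑ j, M 1 t q (Fin.snoc idx j) * Q q j = 0) ∧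
      ∀ r : ℕ, r ≤ m → ∀ (t : ℝ) (q : Vec D) (idx : Fin (r + 1) → Fin D),
        deriv (fun τ => M (r + 1) τ q idx) t + symT (covTens Γ (M r t)) q idx
          - ((r + 2 : ℕ) : ℝ) * ∑ j, M (r + 2) t q (Fin.snoc idx j) * Q q j = 0) := by
  classical
  open Stmt0Aux in
  constructor
  · -- first integral ⇒ PDEs
    intro hFI
    have hEE : ∀ (t : ℝ) (qq : Vec D) (r : ℕ), r < m + 2 →
        ∀ idx : Fin r → Fin D, EE Γ Q M t qq r idx = 0 := by
      intro t₀ q₀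
      have hzero : ∀ v₀ : Vec D,
          ∑ r ∈ Finset.range (m + 2), ctr r (EE Γ Q M t₀ q₀ r) v₀ = 0 := by
        intro v₀
        obtain ⟨ε, hε, q, v, hq0, hv0, hsolOn⟩ := exists_solution Γ Q hΓ hQ t₀ q₀ v₀
        have ht₀ : t₀ ∈ Set.Ioo (t₀ - ε) (t₀ + ε) := ⟨by linarith, by linarith⟩
        have hK := keyDeriv Γ Q M hMsym hMsm hMzero q v t₀ (hsolOn t₀ ht₀)
        rw [hq0, hv0] at hK
        have hconst : ∀ τ ∈ Set.Ioo (t₀ - ε) (t₀ + ε),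
            (fun τ => ∑ r ∈ Finset.range (m + 1), ∑ idx : Fin r → Fin D,
              M r τ (q τ) idx * ∏ k, v τ (idx k)) τ
            = (fun τ => ∑ r ∈ Finset.range (m + 1), ∑ idx : Fin r → Fin D,
              M r τ (q τ) idx * ∏ k, v τ (idx k)) t₀ := by
          intro τ hτ
          exact hFI (t₀ - ε) (t₀ + ε) q v hsolOn τ hτ t₀ ht₀
        have hev : (fun τ => ∑ r ∈ Finset.range (m + 1), ∑ idx : Fin r → Fin D,
              M r τ (q τ) idx * ∏ k, v τ (idx k))
            =ᶠ[nhds t₀] fun _ => ∑ r ∈ Finset.range (m + 1), ∑ idx : Fin r → Fin D,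
              M r t₀ (q t₀) idx * ∏ k, v t₀ (idx k) :=
          Filter.eventually_of_mem (Ioo_mem_nhds ht₀.1 ht₀.2) hconst
        have hK' := (Filter.EventuallyEq.hasDerivAt_iff hev).1 hK
        exact (hK'.unique (hasDerivAt_const _ _))
      have hctr := homog_sep (fun r => EE Γ Q M t₀ q₀ r) hzero
      intro r hr idx
      exact polarization (EE Γ Q M t₀ q₀ r) (EE_symm Γ Q M hMsym t₀ q₀ r) (hctr r hr) idx
    constructor
    · intro t q idx
      have := hEE t q 0 (by omega) idx
      simpa only [EE] using this
    · intro r hr t q idx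
      have := hEE t q (r + 1) (by omega) idx
      simpa only [EE] using this
  · -- PDEs ⇒ first integral
    rintro ⟨h0, hs⟩
    have hEE : ∀ (t : ℝ) (qq : Vec D) (r : ℕ), r < m + 2 →
        ∀ idx : Fin r → Fin D, EE Γ Q M t qq r idx = 0 := by
      intro t qq r hr idx
      match r with
      | 0 => simpa only [EE] using h0 t qq idx
      | (r + 1) => simpa only [EE] using hs r (by omega) t qq idx
    intro a b q v hsol t₁ ht₁ t₂ ht₂
    have hg : ∀ τ ∈ Set.Ioo a b,
        HasDerivAt (fun τ => ∑ r ∈ Finset.range (m + 1), ∑ idx : Fin r → Fin D,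
          M r τ (q τ) idx * ∏ k, v τ (idx k)) 0 τ := by
      intro τ hτ
      have hK := keyDeriv Γ Q M hMsym hMsm hMzero q v τ (hsol τ hτ)
      have hz : ∑ r ∈ Finset.range (m + 2), ctr r (EE Γ Q M τ (q τ) r) (v τ) = 0 := by
        refine Finset.sum_eq_zero fun r hr => ?_
        unfold ctr
        refine Finset.sum_eq_zero fun idx _ => ?_
        rw [hEE τ (q τ) r (Finset.mem_range.1 hr) idx, zero_mul]
      rwa [hz] at hK
    exact const_of_deriv_zero hg t₁ ht₁ t₂ ht₂
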